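/- arXiv:2502.18833 — 9 statements merged into one kernel-verified Lean document; each statement's English description precedes it below -/
import Mathlib

section
/- Let L be the poset defined as follows. Let E = ℕ × (ℕ ∪ {∞}), and for each i ∈ ℕ let C_i = {i} × ℕ. Let F = ∏_{i∈ℕ} C_i, and L = E ∪ (F × {0,1}) with order generated by: (i,m) ≤ (i,n) ≤ (i,∞) whenever m ≤ n in ℕ; and for each φ ∈ F and i ∈ ℕ, φ(i) ≤ (φ,0) ≤ (φ,1). Then L is a dcpo. -/
/-- A subset is Scott open: an upper set inaccessible by directed suprema. -/
def ScottOpen {α : Type*} [Preorder α] (U : Set α) : Prop :=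
  IsUpperSet U ∧ ∀ d : Set α, d.Nonempty → DirectedOn (· ≤ ·) d →
    ∀ a : α, IsLUB d a → a ∈ U → (d ∩ U).Nonempty

/-- A subset is Scott closed: a lower set closed under directed suprema. -/
def ScottClosed {α : Type*} [Preorder α] (C : Set α) : Prop :=
  IsLowerSet C ∧ ∀ d : Set α, d ⊆ C → d.Nonempty → DirectedOn (· ≤ ·) d →
    ∀ a : α, IsLUB d a → a ∈ C

/-- A dcpo: every nonempty directed subset has a supremum. -/
def IsDcpo (α : Type*) [Preorder α] : Prop :=
  ∀ d : Set α, d.Nonempty → DirectedOn (· ≤ ·) d → ∃ a, IsLUB d a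

/-- The way-below relation. -/
def WayBelow {α : Type*} [Preorder α] (x y : α) : Prop :=
  ∀ d : Set α, d.Nonempty → DirectedOn (· ≤ ·) d → ∀ a : α, IsLUB d a → y ≤ a →
    ∃ z ∈ d, x ≤ z

/-- A compact element: one that is way-below itself. -/
def IsCompactElt {α : Type*} [Preorder α] (x : α) : Prop := WayBelow x x

/-- A continuous dcpo (domain). -/
def IsContinuousDcpo (α : Type*) [Preorder α] : Prop :=
  IsDcpo α ∧ ∀ x : α, DirectedOn (· ≤ ·) {y | WayBelow y x} ∧ IsLUB {y | WayBelow y x} x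

/-- An algebraic dcpo (algebraic domain). -/
def IsAlgebraicDcpo (α : Type*) [Preorder α] : Prop :=
  IsDcpo α ∧ ∀ x : α, DirectedOn (· ≤ ·) {k | IsCompactElt k ∧ k ≤ x} ∧
    IsLUB {k | IsCompactElt k ∧ k ≤ x} x

/-- An ideal domain: a continuous dcpo in which every element is compact or maximal. -/
def IsIdealDomain (α : Type*) [Preorder α] : Prop :=
  IsContinuousDcpo α ∧ ∀ x : α, IsCompactElt x ∨ IsMax x

/-- The Scott topology on a preorder. -/
def scottTop (α : Type*) [Preorder α] : TopologicalSpace α where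
  IsOpen := ScottOpen
  isOpen_univ := ⟨isUpperSet_univ, fun d hd _ _ _ _ => hd.imp fun x hx => ⟨hx, trivial⟩⟩
  isOpen_inter U V hU hV := by
    refine ⟨hU.1.inter hV.1, fun d hne hdir a ha haUV => ?_⟩
    obtain ⟨u, hud, huU⟩ := hU.2 d hne hdir a ha haUV.1
    obtain ⟨v, hvd, hvV⟩ := hV.2 d hne hdir a ha haUV.2
    obtain ⟨w, hwd, hw1, hw2⟩ := hdir u hud v hvd
    exact ⟨w, hwd, hU.1 hw1 huU, hV.1 hw2 hvV⟩
  isOpen_sUnion S hS := by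
    constructor
    · rintro a b hab ⟨U, hUS, haU⟩
      exact ⟨U, hUS, (hS U hUS).1 hab haU⟩
    · rintro d hne hdir a ha ⟨U, hUS, haU⟩
      obtain ⟨u, hud, huU⟩ := (hS U hUS).2 d hne hdir a ha haU
      exact ⟨u, hud, U, hUS, huU⟩

/-- The maximal point space of a preorder. -/
abbrev MaxSpace (α : Type*) [Preorder α] := {x : α // IsMax x}

/-- The maximal point space carries the relative Scott topology. -/
instance maxSpaceTop (α : Type*) [Preorder α] : TopologicalSpace (MaxSpace α) :=
  TopologicalSpace.induced Subtype.val (scottTop α)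
/-- The carrier of the poset `L`: `E = ℕ × (ℕ ∪ {∞})` together with `F × {0,1}`,
where an element `φ` of `F = ∏ᵢ Cᵢ` (with `Cᵢ = {i} × ℕ`) is encoded by the function
`ℕ → ℕ` of its second coordinates, i.e. `φ(i) = (i, φ i)`, and `{0,1}` by `Bool`. -/
structure LCarrier where
  toSum : (ℕ × ℕ∞) ⊕ ((ℕ → ℕ) × Bool)

/-- The order on `L` generated by `(i,m) ≤ (i,n) ≤ (i,∞)` for `m ≤ n` in `ℕ`,
and `φ(i) ≤ (φ,0) ≤ (φ,1)` for all `φ ∈ F`, `i ∈ ℕ`. -/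
def lle : LCarrier → LCarrier → Prop
  | ⟨.inl (i, m)⟩, ⟨.inl (j, n)⟩ => i = j ∧ m ≤ n
  | ⟨.inl (i, m)⟩, ⟨.inr (φ, _)⟩ => m ≤ (φ i : ℕ∞)
  | ⟨.inr (φ, b)⟩, ⟨.inr (ψ, c)⟩ => φ = ψ ∧ b ≤ c
  | ⟨.inr _⟩, ⟨.inl _⟩ => False

instance : PartialOrder LCarrier where
  le := lle
  lt a b := lle a b ∧ ¬ lle b a
  lt_iff_le_not_ge _ _ := Iff.rfl
  le_refl x := by rcases x with ⟨⟨i, m⟩ | ⟨φ, b⟩⟩ <;> exact ⟨rfl, le_refl _⟩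
  le_trans x y z h1 h2 := by
    rcases x with ⟨⟨i, m⟩ | ⟨φ, b⟩⟩ <;> rcases y with ⟨⟨j, n⟩ | ⟨ψ, c⟩⟩ <;>
      rcases z with ⟨⟨k, p⟩ | ⟨χ, d⟩⟩ <;>
      simp only [lle] at h1 h2 ⊢
    · exact ⟨h1.1.trans h2.1, h1.2.trans h2.2⟩
    · cases h1.1; exact h1.2.trans h2
    · cases h2.1; exact h1
    · exact ⟨h1.1.trans h2.1, h1.2.trans h2.2⟩
  le_antisymm x y h1 h2 := by
    rcases x with ⟨⟨i, m⟩ | ⟨φ, b⟩⟩ <;> rcases y with ⟨⟨j, n⟩ | ⟨ψ, c⟩⟩ <;>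
      simp only [lle] at h1 h2
    · cases h1.1
      exact congrArg _ (congrArg _ (Prod.ext rfl (le_antisymm h1.2 h2.2)))
    · cases h1.1
      exact congrArg _ (congrArg _ (Prod.ext rfl (le_antisymm h1.2 h2.2)))

/-- The poset `L` is a dcpo: every nonempty directed subset has a supremum. -/
theorem L_isDcpo : IsDcpo LCarrier := by
  intro d hne hdir
  by_cases h : ∃ φ b, (⟨.inr (φ, b)⟩ : LCarrier) ∈ d
  · obtain ⟨φ, b, hmem⟩ := h
    -- every element of d is ≤ inr (φ, true)
    have hub : ∀ x ∈ d, x ≤ (⟨.inr (φ, true)⟩ : LCarrier) := by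
      intro x hx
      obtain ⟨z, hzd, hxz, hbz⟩ := hdir x hx _ hmem
      rcases z with ⟨⟨j, n⟩ | ⟨ψ, c⟩⟩
      · exact absurd hbz (by exact id)
      · obtain ⟨rfl, -⟩ := hbz
        refine le_trans hxz ?_
        exact ⟨rfl, Bool.le_true c⟩
    by_cases ht : (⟨.inr (φ, true)⟩ : LCarrier) ∈ d
    · exact ⟨_, fun x hx => hub x hx, fun a ha => ha ht⟩
    · have hf : (⟨.inr (φ, false)⟩ : LCarrier) ∈ d := by
        cases b
        · exact hmem
        · exact absurd hmem ht
      refine ⟨⟨.inr (φ, false)⟩, fun x hx => ?_, fun a ha => ha hf⟩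
      obtain ⟨z, hzd, hxz, hfz⟩ := hdir x hx _ hf
      rcases z with ⟨⟨j, n⟩ | ⟨ψ, c⟩⟩
      · exact absurd hfz (by exact id)
      · obtain ⟨rfl, -⟩ := hfz
        cases c
        · exact le_trans hxz (le_refl _)
        · exact absurd hzd ht
  · push_neg at h
    obtain ⟨x₀, hx₀⟩ := hne
    rcases x₀ with ⟨⟨i₀, m₀⟩ | ⟨φ, b⟩⟩
    swap
    · exact absurd hx₀ (h φ b)
    -- every element of d has the form inl (i₀, m)
    have hshape : ∀ x ∈ d, ∃ m : ℕ∞, x = ⟨.inl (i₀, m)⟩ := by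
      intro x hx
      obtain ⟨z, hzd, hxz, h0z⟩ := hdir x hx _ hx₀
      rcases z with ⟨⟨k, p⟩ | ⟨ψ, c⟩⟩
      · obtain ⟨rfl, -⟩ := h0z
        rcases x with ⟨⟨j, m⟩ | ⟨ψ, c⟩⟩
        · obtain ⟨rfl, -⟩ := hxz
          exact ⟨m, rfl⟩
        · exact absurd hxz (by exact id)
      · exact absurd hzd (h ψ c)
    set S : Set ℕ∞ := {m | (⟨.inl (i₀, m)⟩ : LCarrier) ∈ d} with hS
    refine ⟨⟨.inl (i₀, sSup S)⟩, fun x hx => ?_, fun a ha => ?_⟩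
    · obtain ⟨m, rfl⟩ := hshape x hx
      exact ⟨rfl, le_sSup hx⟩
    · have hSne : m₀ ∈ S := hx₀
      rcases a with ⟨⟨j, n⟩ | ⟨ψ, c⟩⟩
      · have h0 : lle ⟨.inl (i₀, m₀)⟩ ⟨.inl (j, n)⟩ := ha hx₀
        obtain ⟨rfl, -⟩ := h0
        refine ⟨rfl, sSup_le fun m hm => ?_⟩
        exact (ha hm).2
      · show sSup S ≤ (ψ i₀ : ℕ∞)
        refine sSup_le fun m hm => ?_
        exact ha hm
end

section
/- Let L be the poset from the construction: E = ℕ × (ℕ ∪ {∞}), C_i = {i} × ℕ, F = ∏_{i∈ℕ} C_i, L = E ∪ (F × {0,1}) with order generated by (i,m) ≤ (i,n) ≤ (i,∞) for m ≤ n, and φ(i) ≤ (φ,0) ≤ (φ,1) for φ ∈ F, i ∈ ℕ. Then every element of L is either compact (way-below itself) or maximal in L. -/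
section Aux

lemma lle_iff (x y : LCarrier) : x ≤ y ↔ lle x y := Iff.rfl

lemma column_of_all_inl (d : Set LCarrier) (hdir : DirectedOn (· ≤ ·) d)
    (j : ℕ) (n0 : ℕ∞) (h0 : (⟨.inl (j, n0)⟩ : LCarrier) ∈ d)
    (hall : ∀ y ∈ d, ∃ p : ℕ × ℕ∞, y = ⟨.inl p⟩) :
    ∀ y ∈ d, ∃ n : ℕ∞, y = ⟨.inl (j, n)⟩ := by
  intro y hy
  obtain ⟨⟨j', n'⟩, rfl⟩ := hall y hy
  obtain ⟨w, hw, h1, h2⟩ := hdir _ h0 _ hy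
  obtain ⟨⟨jw, nw⟩, rfl⟩ := hall w hw
  have h1' : j = jw ∧ n0 ≤ nw := h1
  have h2' : j' = jw ∧ n' ≤ nw := h2
  exact ⟨n', by rw [h1'.1, h2'.1]⟩

/-- If a directed set consists only of `inl` elements, its LUB is an `inl` element
in the same column. -/
lemma lub_of_all_inl (d : Set LCarrier) (hdir : DirectedOn (· ≤ ·) d)
    (j : ℕ) (n0 : ℕ∞) (h0 : (⟨.inl (j, n0)⟩ : LCarrier) ∈ d)
    (hall : ∀ y ∈ d, ∃ p : ℕ × ℕ∞, y = ⟨.inl p⟩)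
    (a : LCarrier) (ha : IsLUB d a) :
    ∃ n : ℕ∞, a = ⟨.inl (j, n)⟩ := by
  have hcol := column_of_all_inl d hdir j n0 h0 hall
  have hub : (⟨.inl (j, ⊤)⟩ : LCarrier) ∈ upperBounds d := by
    intro y hy
    obtain ⟨n, rfl⟩ := hcol y hy
    exact ⟨rfl, le_top⟩
  have hle : a ≤ ⟨.inl (j, ⊤)⟩ := ha.2 hub
  rcases a with ⟨⟨ja, na⟩ | ⟨ψ, c⟩⟩
  · have h : ja = j ∧ na ≤ ⊤ := hle
    exact ⟨na, by rw [h.1]⟩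
  · exact absurd hle (by exact fun h => h)

end Aux

/-- Every element of `L` is either compact (way-below itself) or maximal. -/
theorem L_compact_or_maximal : ∀ x : LCarrier, IsCompactElt x ∨ IsMax x := by
  rintro ⟨⟨i, m⟩ | ⟨φ, b⟩⟩
  · -- elements of E
    induction m using ENat.recTopCoe with
    | top =>
      right
      rintro ⟨⟨j, n⟩ | ⟨ψ, c⟩⟩ hy
      · obtain ⟨rfl, hn⟩ : i = j ∧ (⊤ : ℕ∞) ≤ n := hy
        exact ⟨rfl, le_top⟩
      · exact absurd (top_le_iff.mp hy) (ENat.coe_ne_top _)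
    | coe K =>
      left
      intro d hne hdir a ha hle
      by_cases hex : ∃ ψ c, (⟨.inr (ψ, c)⟩ : LCarrier) ∈ d
      · obtain ⟨ψ, c, hmem⟩ := hex
        refine ⟨_, hmem, ?_⟩
        have hup := ha.1 hmem
        rcases a with ⟨⟨ja, na⟩ | ⟨χ, e⟩⟩
        · exact absurd hup (fun h => h)
        · obtain ⟨rfl, -⟩ : ψ = χ ∧ c ≤ e := hup
          have : (K : ℕ∞) ≤ (ψ i : ℕ∞) := hle
          exact this
      · have hall : ∀ y ∈ d, ∃ p : ℕ × ℕ∞, y = ⟨.inl p⟩ := by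
          rintro ⟨⟨j, n⟩ | ⟨ψ, c⟩⟩ hy
          · exact ⟨(j, n), rfl⟩
          · exact absurd ⟨ψ, c, hy⟩ hex
        obtain ⟨y0, hy0⟩ := hne
        obtain ⟨⟨j, n0⟩, rfl⟩ := hall y0 hy0
        obtain ⟨n, rfl⟩ := lub_of_all_inl d hdir j n0 hy0 hall a ha
        obtain ⟨rfl, hKn⟩ : i = j ∧ (K : ℕ∞) ≤ n := hle
        have hcol := column_of_all_inl d hdir i n0 hy0 hall
        by_contra hcon
        push_neg at hcon
        have hlt : ∀ n' : ℕ∞, (⟨.inl (i, n')⟩ : LCarrier) ∈ d → n' < (K : ℕ∞) := by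
          intro n' hn'
          by_contra h
          push_neg at h
          exact hcon _ hn' ⟨rfl, h⟩
        have hK0 : 0 < K := by
          have := hlt n0 hy0
          by_contra h
          push_neg at h
          interval_cases K
          simp at this
        have hub : (⟨.inl (i, ((K - 1 : ℕ) : ℕ∞))⟩ : LCarrier) ∈ upperBounds d := by
          intro y hy
          obtain ⟨n', rfl⟩ := hcol y hy
          have hn' := hlt n' hy
          lift n' to ℕ using hn'.ne_top
          refine ⟨rfl, ?_⟩
          exact_mod_cast Nat.le_sub_one_of_lt (by exact_mod_cast hn')
        have : n ≤ ((K - 1 : ℕ) : ℕ∞) := (ha.2 hub).2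
        have : (K : ℕ∞) ≤ ((K - 1 : ℕ) : ℕ∞) := le_trans hKn this
        have : K ≤ K - 1 := by exact_mod_cast this
        omega
  · -- elements of F × {0,1}
    cases b with
    | true =>
      right
      rintro ⟨⟨j, n⟩ | ⟨ψ, c⟩⟩ hy
      · exact absurd hy (fun h => h)
      · obtain ⟨rfl, hc⟩ : φ = ψ ∧ true ≤ c := hy
        cases c with
        | true => exact ⟨rfl, le_refl _⟩
        | false => exact absurd hc (by simp)
    | false =>
      left
      intro d hne hdir a ha hle
      by_cases hex : ∃ ψ c, (⟨.inr (ψ, c)⟩ : LCarrier) ∈ d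
      · obtain ⟨ψ, c, hmem⟩ := hex
        refine ⟨_, hmem, ?_⟩
        have hup := ha.1 hmem
        rcases a with ⟨⟨ja, na⟩ | ⟨χ, e⟩⟩
        · exact absurd hup (fun h => h)
        · obtain ⟨h1, -⟩ : ψ = χ ∧ c ≤ e := hup
          obtain ⟨h2, -⟩ : φ = χ ∧ false ≤ e := hle
          exact ⟨h2.trans h1.symm, Bool.false_le c⟩
      · have hall : ∀ y ∈ d, ∃ p : ℕ × ℕ∞, y = ⟨.inl p⟩ := by
          rintro ⟨⟨j, n⟩ | ⟨ψ, c⟩⟩ hy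
          · exact ⟨(j, n), rfl⟩
          · exact absurd ⟨ψ, c, hy⟩ hex
        obtain ⟨y0, hy0⟩ := hne
        obtain ⟨⟨j, n0⟩, rfl⟩ := hall y0 hy0
        obtain ⟨n, rfl⟩ := lub_of_all_inl d hdir j n0 hy0 hall a ha
        exact absurd hle (fun h => h)
end

section
/- Let L be the poset from the construction: E = ℕ × (ℕ ∪ {∞}), C_i = {i} × ℕ, F = ∏_{i∈ℕ} C_i, L = E ∪ (F × {0,1}) with order generated by (i,m) ≤ (i,n) ≤ (i,∞) for m ≤ n, and φ(i) ≤ (φ,0) ≤ (φ,1). Then the set Max(L) of maximal elements of L is not a G_δ-set in the Scott topology on L: there is no countable family (U_n) of Scott-open subsets of L with Max(L) = ⋂_n U_n. -/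
/-- The chain `{(i, m) : m ∈ ℕ}` in `L`. -/
def lchain (i : ℕ) : Set LCarrier := Set.range (fun m : ℕ => ⟨.inl (i, (m : ℕ∞))⟩)

lemma lchain_directed (i : ℕ) : DirectedOn (· ≤ ·) (lchain i) := by
  rintro _ ⟨m, rfl⟩ _ ⟨m', rfl⟩
  refine ⟨⟨.inl (i, ((max m m' : ℕ) : ℕ∞))⟩, Set.mem_range_self _, ?_, ?_⟩
  · exact ⟨rfl, by exact_mod_cast le_max_left m m'⟩
  · exact ⟨rfl, by exact_mod_cast le_max_right m m'⟩

lemma lchain_lub (i : ℕ) : IsLUB (lchain i) ⟨.inl (i, ⊤)⟩ := by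
  constructor
  · rintro _ ⟨m, rfl⟩
    exact ⟨rfl, le_top⟩
  · rintro ⟨⟨j, p⟩ | ⟨φ, c⟩⟩ hb
    · obtain ⟨rfl, -⟩ : i = j ∧ ((0 : ℕ) : ℕ∞) ≤ p := hb (Set.mem_range_self 0)
      have hall : ∀ m : ℕ, (m : ℕ∞) ≤ p := fun m => (hb (Set.mem_range_self m)).2
      rcases eq_or_ne p ⊤ with rfl | hp
      · exact ⟨rfl, le_rfl⟩
      · lift p to ℕ using hp
        have := hall (p + 1)
        exact absurd (by exact_mod_cast this) (Nat.not_succ_le_self p)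
    · have := hb (Set.mem_range_self (φ i + 1))
      exact absurd (show ((φ i + 1 : ℕ) : ℕ∞) ≤ (φ i : ℕ∞) from this)
        (by exact_mod_cast Nat.not_succ_le_self (φ i))

lemma L_isMax_top (i : ℕ) : IsMax (⟨.inl (i, ⊤)⟩ : LCarrier) := by
  rintro ⟨⟨j, p⟩ | ⟨φ, c⟩⟩ h
  · obtain ⟨rfl, hp⟩ : i = j ∧ (⊤ : ℕ∞) ≤ p := h
    exact ⟨rfl, le_top⟩
  · exact absurd (show (⊤ : ℕ∞) ≤ (φ i : ℕ∞) from h) (by simp)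

/-- `Max(L)` is not a `G_δ`-set in the Scott topology on `L`: there is no
countable family of Scott-open subsets of `L` whose intersection is `Max(L)`. -/
theorem L_max_not_Gdelta :
    ¬ ∃ U : ℕ → Set LCarrier,
        (∀ n, ScottOpen (U n)) ∧ {x : LCarrier | IsMax x} = ⋂ n, U n := by
  rintro ⟨U, hopen, hmax⟩
  have htop : ∀ n, (⟨.inl (n, ⊤)⟩ : LCarrier) ∈ U n := fun n => by
    have h1 : (⟨.inl (n, ⊤)⟩ : LCarrier) ∈ ⋂ k, U k := by
      rw [← hmax]; exact L_isMax_top n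
    exact Set.mem_iInter.mp h1 n
  have key : ∀ n, ∃ m : ℕ, (⟨.inl (n, (m : ℕ∞))⟩ : LCarrier) ∈ U n := fun n => by
    obtain ⟨x, hxd, hxU⟩ := (hopen n).2 (lchain n) ⟨_, Set.mem_range_self 0⟩
      (lchain_directed n) _ (lchain_lub n) (htop n)
    obtain ⟨m, rfl⟩ := hxd
    exact ⟨m, hxU⟩
  choose f hf using key
  have hmem : (⟨.inr (f, false)⟩ : LCarrier) ∈ ⋂ n, U n := by
    refine Set.mem_iInter.mpr fun n => (hopen n).1 ?_ (hf n)
    exact le_refl ((f n : ℕ∞))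
  have hISmax : IsMax (⟨.inr (f, false)⟩ : LCarrier) := by
    rw [← hmax] at hmem; exact hmem
  have hle : (⟨.inr (f, false)⟩ : LCarrier) ≤ ⟨.inr (f, true)⟩ := ⟨rfl, Bool.false_le true⟩
  obtain ⟨-, h2⟩ : f = f ∧ true ≤ false := hISmax hle
  exact absurd h2 (by decide)
end

section
/- Let L be the poset from the construction above and let L̂ = L \ {(φ,1) : φ ∈ F} with the inherited order. For each k ∈ ℕ define U_k = L̂ \ ⋃{↓(i,k) : i ≤ k}. Then each U_k is Scott open in L̂ and ⋂_{k∈ℕ} U_k = Max(L̂); hence Max(L̂) is a G_δ-set in the Scott topology on L̂. -/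
/-- The poset `L̂ = L \ {(φ,1) : φ ∈ F}` with the inherited order. -/
abbrev LHat := {x : LCarrier // ∀ φ : ℕ → ℕ, x ≠ ⟨Sum.inr (φ, true)⟩}

/-- The element `(i,k)` of `L̂` (with `k ∈ ℕ ⊆ ℕ∪{∞}`). -/
def ikElem (i k : ℕ) : LHat :=
  ⟨⟨Sum.inl (i, (k : ℕ∞))⟩, fun φ h => by cases h⟩

/-- `U_k = L̂ \ ⋃ {↓(i,k) : i ≤ k}`. -/
def Uset (k : ℕ) : Set LHat := {x | ∀ i ≤ k, ¬ x ≤ ikElem i k}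

lemma lle_inl_iff {x : LCarrier} {i : ℕ} {k : ℕ∞} :
    x ≤ ⟨Sum.inl (i, k)⟩ ↔ ∃ m : ℕ∞, x = ⟨Sum.inl (i, m)⟩ ∧ m ≤ k := by
  constructor
  · rcases x with ⟨⟨j, n⟩ | ⟨φ, b⟩⟩
    · rintro ⟨rfl, h⟩; exact ⟨n, rfl, h⟩
    · intro h; exact absurd h id
  · rintro ⟨m, rfl, h⟩; exact ⟨rfl, h⟩

/-- Each `U_k` is Scott open in `L̂`, `⋂ₖ U_k = Max(L̂)`, and hence
`Max(L̂)` is a `G_δ`-set in the Scott topology on `L̂`. -/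
theorem LHat_max_Gdelta :
    (∀ k : ℕ, ScottOpen (Uset k)) ∧
    (⋂ k : ℕ, Uset k) = {x : LHat | IsMax x} ∧
    ∃ V : ℕ → Set LHat, (∀ n, ScottOpen (V n)) ∧ (⋂ n, V n) = {x : LHat | IsMax x} := by

  have hopen : ∀ k : ℕ, ScottOpen (Uset k) := by
    intro k
    constructor
    · intro x y hxy hx i hi hle
      exact hx i hi (le_trans hxy hle)
    · intro d hne hdir a ha haU
      by_contra hcon
      rw [Set.not_nonempty_iff_eq_empty] at hcon
      have hsub : ∀ x ∈ d, ∃ i ≤ k, x ≤ ikElem i k := by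
        intro x hx
        by_contra hxU
        push_neg at hxU
        exact Set.eq_empty_iff_forall_notMem.mp hcon x ⟨hx, fun i hi => hxU i hi⟩
      obtain ⟨x0, hx0⟩ := hne
      obtain ⟨i0, hi0, hle0⟩ := hsub x0 hx0
      obtain ⟨m0, hm0, hm0k⟩ := lle_inl_iff.mp hle0
      have hub : ∀ y ∈ d, y ≤ ikElem i0 k := by
        intro y hy
        obtain ⟨z, hz, hxz, hyz⟩ := hdir x0 hx0 y hy
        obtain ⟨iz, hiz, hlez⟩ := hsub z hz
        obtain ⟨mz, hmz, hmzk⟩ := lle_inl_iff.mp hlez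
        have hxz' : x0.val ≤ z.val := hxz
        rw [hm0, hmz] at hxz'
        obtain ⟨hii, -⟩ := hxz'
        have hzik : z ≤ ikElem i0 k := by
          show z.val ≤ (ikElem i0 k).val
          rw [hmz, ← hii]
          exact ⟨rfl, hmzk⟩
        exact le_trans hyz hzik
      exact haU i0 hi0 (ha.2 hub)
  have hint : (⋂ k : ℕ, Uset k) = {x : LHat | IsMax x} := by
    ext x
    simp only [Set.mem_iInter, Set.mem_setOf_eq]
    constructor
    · intro h
      rcases x with ⟨⟨⟨i, m⟩ | ⟨φ, b⟩⟩, hx⟩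
      · cases m with
        | top =>
          rintro ⟨⟨⟨j, n⟩ | ⟨ψ, c⟩⟩, hy'⟩ hy
          · obtain ⟨rfl, hn⟩ := (show lle _ _ from hy)
            have : n = ⊤ := top_le_iff.mp hn
            subst this
            exact le_refl _
          · exact absurd (show (⊤ : ℕ∞) ≤ (ψ i : ℕ∞) from hy)
              (by simp)
        | coe n =>
          exfalso
          refine h (max i n) i (le_max_left _ _) ?_
          exact ⟨rfl, by exact_mod_cast le_max_right i n⟩
      · cases b with
        | true => exact absurd rfl (hx φ)
        | false =>
          rintro ⟨⟨⟨j, n⟩ | ⟨ψ, c⟩⟩, hy'⟩ hy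
          · exact absurd (show lle _ _ from hy) id
          · obtain ⟨rfl, hc⟩ := (show lle _ _ from hy)
            cases c with
            | false => exact le_refl _
            | true => exact absurd rfl (hy' φ)
    · intro hmax k i hik hle
      have htop : ikElem i k ≤ ⟨⟨Sum.inl (i, (⊤ : ℕ∞))⟩, fun φ h => by cases h⟩ :=
        ⟨rfl, le_top⟩
      have h2 := hmax (le_trans hle htop)
      have h3 := le_trans h2 hle
      obtain ⟨-, h4⟩ := (show lle _ _ from h3)
      exact absurd (top_le_iff.mp h4) (by simp)
  exact ⟨hopen, hint, Uset, hopen, hint⟩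
end

section
/- Let P be an ideal domain and let X ⊆ Max(P) be closed in the maximal point space (i.e., X = C ∩ Max(P) for some Scott-closed C ⊆ P). Then ↓X is a Scott-closed subset of P. -/
/-- If `P` is an ideal domain and `X ⊆ Max(P)` is closed in the maximal point
space (`X = C ∩ Max(P)` for a Scott-closed `C`), then `↓X` is Scott closed in `P`. -/
theorem downclosure_scottClosed {P : Type*} [PartialOrder P]
    (hP : IsIdealDomain P) (C : Set P) (hC : ScottClosed C) :
    ScottClosed {y : P | ∃ x ∈ C ∩ {m : P | IsMax m}, y ≤ x} := by
  obtain ⟨⟨hdcpo, hcont⟩, hmax⟩ := hP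
  constructor
  · rintro b c hcb ⟨x, hx, hbx⟩
    exact ⟨x, hx, hcb.trans hbx⟩
  · rintro d hd hne hdir a ha
    rcases hmax a with hcomp | hamax
    · obtain ⟨z, hzd, haz⟩ := hcomp d hne hdir a ha le_rfl
      obtain ⟨x, hx, hzx⟩ := hd hzd
      exact ⟨x, hx, haz.trans hzx⟩
    · rcases Set.eq_empty_or_nonempty {y | WayBelow y a} with hE | hE
      · obtain ⟨y, hyd⟩ := hne
        obtain ⟨x, hx, hyx⟩ := hd hyd
        have hlub := (hcont a).2
        rw [hE] at hlub
        exact ⟨x, hx, hlub.2 (by simp [upperBounds])⟩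
      · have hW : {y | WayBelow y a} ⊆ C := by
          intro w hw
          obtain ⟨z, hzd, hwz⟩ := hw d hne hdir a ha le_rfl
          obtain ⟨x, hx, hzx⟩ := hd hzd
          exact hC.1 (hwz.trans hzx) hx.1
        have haC : a ∈ C := hC.2 _ hW hE (hcont a).1 a (hcont a).2
        exact ⟨a, ⟨haC, hamax⟩, le_rfl⟩
end

section
/- Every Scott-closed subset of an ideal domain, with the inherited order, is itself an ideal domain. -/
lemma wayBelow_le' {α : Type*} [Preorder α] {x y : α} (h : WayBelow x y) : x ≤ y := by
  obtain ⟨z, hz, hxz⟩ := h {y} ⟨y, rfl⟩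
    (fun a ha b hb => ⟨y, rfl, by simp_all, by simp_all⟩) y isLUB_singleton le_rfl
  simp only [Set.mem_singleton_iff] at hz
  exact hz ▸ hxz

/-- Every Scott-closed subset of an ideal domain, with the inherited order,
is itself an ideal domain. -/
theorem scottClosed_idealDomain {P : Type*} [PartialOrder P]
    (hP : IsIdealDomain P) (C : Set P) (hC : ScottClosed C) :
    IsIdealDomain C := by
  obtain ⟨⟨hdcpo, hcont⟩, hmax⟩ := hP
  have himg : ∀ d : Set C, DirectedOn (· ≤ ·) d →
      DirectedOn (· ≤ ·) (Subtype.val '' d) := by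
    rintro d hdir _ ⟨u, hu, rfl⟩ _ ⟨v, hv, rfl⟩
    obtain ⟨w, hw, h1, h2⟩ := hdir u hu v hv
    exact ⟨w.val, ⟨w, hw, rfl⟩, h1, h2⟩
  have hsup : ∀ d : Set C, d.Nonempty → DirectedOn (· ≤ ·) d →
      ∃ a : C, IsLUB d a ∧ IsLUB (Subtype.val '' d) a.val := by
    intro d hne hdir
    have hne' : (Subtype.val '' d).Nonempty := hne.image _
    have hdir' := himg d hdir
    obtain ⟨b, hb⟩ := hdcpo _ hne' hdir'
    have hbC : b ∈ C := hC.2 _ (by rintro _ ⟨u, hu, rfl⟩; exact u.2) hne' hdir' b hb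
    refine ⟨⟨b, hbC⟩, ⟨?_, ?_⟩, hb⟩
    · intro x hx; exact hb.1 ⟨x, hx, rfl⟩
    · intro c hc; exact hb.2 (by rintro _ ⟨u, hu, rfl⟩; exact hc hu)
  have hlub_down : ∀ (d : Set C) (a : C), d.Nonempty → DirectedOn (· ≤ ·) d →
      IsLUB d a → IsLUB (Subtype.val '' d) a.val := by
    intro d a hne hdir ha
    obtain ⟨a', ha', hb⟩ := hsup d hne hdir
    have : a = a' := ha.unique ha'
    rw [this]; exact hb
  have hwb : ∀ x y : C, WayBelow x.val y.val → WayBelow x y := by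
    intro x y h d hne hdir a ha hya
    have hb := hlub_down d a hne hdir ha
    obtain ⟨_, ⟨z, hz, rfl⟩, hxz⟩ := h _ (hne.image _) (himg d hdir) a.val hb hya
    exact ⟨z, hz, hxz⟩
  refine ⟨⟨fun d hne hdir => (hsup d hne hdir).imp fun a ha => ha.1, ?_⟩, ?_⟩
  · intro x
    have hsubC : ∀ y : P, WayBelow y x.val → y ∈ C := fun y hy =>
      hC.1 (wayBelow_le' hy) x.2
    have hPd := (hcont x.val).1
    have hPl := (hcont x.val).2
    have hSne : {y : P | WayBelow y x.val}.Nonempty := by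
      rcases Set.eq_empty_or_nonempty {y : P | WayBelow y x.val} with he | hne
      · exfalso
        have hbot : ∀ b : P, x.val ≤ b := by
          intro b
          exact hPl.2 (by rw [he]; intro z hz; exact absurd hz (Set.notMem_empty z))
        have hxx : WayBelow x.val x.val := by
          intro d hne hdir a ha hx
          obtain ⟨z, hz⟩ := hne
          exact ⟨z, hz, hbot z⟩
        exact (he ▸ hxx : x.val ∈ (∅ : Set P))
      · exact hne
    set S : Set C := Subtype.val ⁻¹' {y : P | WayBelow y x.val} with hSdef
    have hSne' : S.Nonempty := by
      obtain ⟨y, hy⟩ := hSne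
      exact ⟨⟨y, hsubC y hy⟩, hy⟩
    have hSdir : DirectedOn (· ≤ ·) S := by
      intro u hu v hv
      obtain ⟨w, hw, h1, h2⟩ := hPd u.val hu v.val hv
      exact ⟨⟨w, hsubC w hw⟩, hw, h1, h2⟩
    have hSlub : IsLUB S x := by
      constructor
      · intro y hy
        exact hPl.1 hy
      · intro c hc
        show x.val ≤ c.val
        apply hPl.2
        intro y hy
        exact hc (show (⟨y, hsubC y hy⟩ : C) ∈ S from hy)
    have hST : S ⊆ {y : C | WayBelow y x} := fun y hy => hwb y x hy
    constructor
    · intro u hu v hv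
      obtain ⟨zu, hzu, huz⟩ := hu S hSne' hSdir x hSlub le_rfl
      obtain ⟨zv, hzv, hvz⟩ := hv S hSne' hSdir x hSlub le_rfl
      obtain ⟨w, hw, h1, h2⟩ := hSdir zu hzu zv hzv
      exact ⟨w, hST hw, le_trans huz h1, le_trans hvz h2⟩
    · constructor
      · intro y hy
        exact wayBelow_le' hy
      · intro c hc
        exact hSlub.2 fun y hy => hc (hST hy)
  · intro x
    rcases hmax x.val with h | h
    · exact Or.inl (hwb x x h)
    · exact Or.inr fun b hxb => h hxb
end

section
/- With Q as above (triples (U,V,k) with U × V ⊆ ↑k ∩ Max(P), ordered by (U₁,V₁,k₁) ⊑ (U₂,V₂,k₂) iff k₁ ≤ k₂ and ↑k₂ ∩ Max(P) ⊆ U₁ × V₁): for each x ∈ X, the set 𝒥(x) = {(U,V,k) ∈ Q : x ∈ U} is an ideal of Q (a directed lower set). -/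
section ProductConstruction

variable {P X Y : Type*} [PartialOrder P] [TopologicalSpace X] [TopologicalSpace Y]

/-- The poset `Q` of triples `(U,V,k)` with `U` a nonempty open subset of `X`, `V` an open
neighborhood of `y₀`, `k` a compact element of `P`, and `U × V ⊆ ↑k ∩ Max(P)` (via the
identification `e : Max(P) ≅ X × Y`). -/
def QSet (e : MaxSpace P ≃ₜ X × Y) (y₀ : Y) : Set (Set X × Set Y × P) :=
  {t | IsOpen t.1 ∧ t.1.Nonempty ∧ IsOpen t.2.1 ∧ y₀ ∈ t.2.1 ∧ IsCompactElt t.2.2 ∧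
    ∀ m : MaxSpace P, (e m).1 ∈ t.1 → (e m).2 ∈ t.2.1 → t.2.2 ≤ m.val}

/-- The relation `⊑` on `Q`: `(U₁,V₁,k₁) ⊑ (U₂,V₂,k₂)` iff `k₁ ≤ k₂` and
`↑k₂ ∩ Max(P) ⊆ U₁ × V₁`. -/
def QRel (e : MaxSpace P ≃ₜ X × Y) (y₀ : Y) (t₁ t₂ : QSet e y₀) : Prop :=
  t₁.val.2.2 ≤ t₂.val.2.2 ∧
    ∀ m : MaxSpace P, t₂.val.2.2 ≤ m.val → (e m).1 ∈ t₁.val.1 ∧ (e m).2 ∈ t₁.val.2.1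

/-- `𝒥(x) = {(U,V,k) ∈ Q : x ∈ U}`. -/
def JSet (e : MaxSpace P ≃ₜ X × Y) (y₀ : Y) (x : X) : Set (QSet e y₀) :=
  {t | x ∈ t.val.1}

end ProductConstruction


lemma compact_exists_le {P : Type*} [PartialOrder P] (hP : IsAlgebraicDcpo P) (p : P) :
    ∃ k, IsCompactElt k ∧ k ≤ p := by
  obtain ⟨hdir, hlub⟩ := hP.2 p
  by_cases h : {k | IsCompactElt k ∧ k ≤ p}.Nonempty
  · obtain ⟨k, hk⟩ := h; exact ⟨k, hk⟩
  · rw [Set.not_nonempty_iff_eq_empty] at h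
    rw [h] at hlub
    have hbot : ∀ q, p ≤ q := fun q => hlub.2 (fun a ha => ha.elim)
    refine ⟨p, ?_, le_refl p⟩
    intro d hne hdir' a ha hpa
    obtain ⟨z, hz⟩ := hne
    exact ⟨z, hz, hbot z⟩

lemma scottOpen_Ici {P : Type*} [PartialOrder P] {k : P} (hk : IsCompactElt k) :
    ScottOpen {p : P | k ≤ p} := by
  refine ⟨fun a b hab ha => ha.trans hab, ?_⟩
  intro d hne hdir a ha hka
  obtain ⟨z, hzd, hkz⟩ := hk d hne hdir a ha hka
  exact ⟨z, hzd, hkz⟩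

lemma exists_nbhd {P X Y : Type*} [PartialOrder P] [TopologicalSpace X] [TopologicalSpace Y]
    (e : MaxSpace P ≃ₜ X × Y) {k : P} (hk : IsCompactElt k) (m : MaxSpace P)
    (hkm : k ≤ m.val) :
    ∃ U V, IsOpen U ∧ IsOpen V ∧ (e m).1 ∈ U ∧ (e m).2 ∈ V ∧
      ∀ m' : MaxSpace P, (e m').1 ∈ U → (e m').2 ∈ V → k ≤ m'.val := by
  have hS : IsOpen {m' : MaxSpace P | k ≤ m'.val} :=
    ⟨{p | k ≤ p}, scottOpen_Ici hk, rfl⟩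
  have hT : IsOpen (e.symm ⁻¹' {m' : MaxSpace P | k ≤ m'.val}) :=
    hS.preimage e.symm.continuous
  have hmemT : ((e m).1, (e m).2) ∈ e.symm ⁻¹' {m' : MaxSpace P | k ≤ m'.val} := by
    show k ≤ (e.symm ((e m).1, (e m).2)).val
    rw [show ((e m).1, (e m).2) = e m from rfl, e.symm_apply_apply]
    exact hkm
  obtain ⟨U, V, hU, hV, hxU, hyV, hUV⟩ := isOpen_prod_iff.mp hT (e m).1 (e m).2 hmemT
  refine ⟨U, V, hU, hV, hxU, hyV, ?_⟩
  intro m' h1 h2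
  have : e m' ∈ U ×ˢ V := ⟨h1, h2⟩
  have h3 : e m' ∈ e.symm ⁻¹' {m' : MaxSpace P | k ≤ m'.val} := hUV this
  simpa using h3

/-- For each `x ∈ X`, the set `𝒥(x)` is an ideal of `(Q,⊑)`: a nonempty,
`⊑`-directed lower set. -/
theorem JSet_ideal {P X Y : Type*} [PartialOrder P]
    [TopologicalSpace X] [TopologicalSpace Y] (hP : IsAlgebraicDcpo P)
    (e : MaxSpace P ≃ₜ X × Y) (y₀ : Y) (x : X) :
    (JSet e y₀ x).Nonempty ∧
    (∀ a ∈ JSet e y₀ x, ∀ b ∈ JSet e y₀ x,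
      ∃ c ∈ JSet e y₀ x, QRel e y₀ a c ∧ QRel e y₀ b c) ∧
    (∀ a b : QSet e y₀, QRel e y₀ a b → b ∈ JSet e y₀ x → a ∈ JSet e y₀ x) := by
  set m : MaxSpace P := e.symm (x, y₀) with hmdef
  have hem : e m = (x, y₀) := e.apply_symm_apply _
  refine ⟨?_, ?_, ?_⟩
  · obtain ⟨k, hk, hkm⟩ := compact_exists_le hP m.val
    obtain ⟨U, V, hU, hV, hxU, hyV, hcond⟩ := exists_nbhd e hk m hkm
    rw [hem] at hxU hyV
    exact ⟨⟨(U, V, k), hU, ⟨x, hxU⟩, hV, hyV, hk, fun m' h1 h2 => hcond m' h1 h2⟩, hxU⟩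
  · rintro a hax b hbx
    obtain ⟨hUa, hUane, hVa, hy0a, hka, hconda⟩ := a.property
    obtain ⟨hUb, hUbne, hVb, hy0b, hkb, hcondb⟩ := b.property
    have hkam : a.val.2.2 ≤ m.val := hconda m (by rw [hem]; exact hax) (by rw [hem]; exact hy0a)
    have hkbm : b.val.2.2 ≤ m.val := hcondb m (by rw [hem]; exact hbx) (by rw [hem]; exact hy0b)
    obtain ⟨hdir, hlub⟩ := hP.2 m.val
    have hW : IsOpen (e ⁻¹' ((a.val.1 ∩ b.val.1) ×ˢ (a.val.2.1 ∩ b.val.2.1))) :=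
      ((hUa.inter hUb).prod (hVa.inter hVb)).preimage e.continuous
    obtain ⟨O, hO, hOW⟩ : ∃ O, ScottOpen O ∧
        Subtype.val ⁻¹' O = e ⁻¹' ((a.val.1 ∩ b.val.1) ×ˢ (a.val.2.1 ∩ b.val.2.1)) := hW
    have hmO : m.val ∈ O := by
      have : m ∈ Subtype.val ⁻¹' O := by
        rw [hOW]
        simp only [Set.mem_preimage, hem]
        exact ⟨⟨hax, hbx⟩, ⟨hy0a, hy0b⟩⟩
      exact this
    obtain ⟨z, hzS, hzO⟩ := hO.2 {k | IsCompactElt k ∧ k ≤ m.val} ⟨a.val.2.2, ⟨hka, hkam⟩⟩ hdir m.val hlub hmO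
    obtain ⟨k₁, hk₁S, hk₁a, hk₁b⟩ := hdir _ ⟨hka, hkam⟩ _ ⟨hkb, hkbm⟩
    obtain ⟨k, hkS, hzk, hk₁k⟩ := hdir z hzS k₁ hk₁S
    have hkO : k ∈ O := hO.1 hzk hzO
    have hmem : ∀ m' : MaxSpace P, k ≤ m'.val →
        ((e m').1 ∈ a.val.1 ∧ (e m').2 ∈ a.val.2.1) ∧
        ((e m').1 ∈ b.val.1 ∧ (e m').2 ∈ b.val.2.1) := by
      intro m' h
      have hmem' : m' ∈ Subtype.val ⁻¹' O := hO.1 h hkO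
      rw [hOW] at hmem'
      exact ⟨⟨hmem'.1.1, hmem'.2.1⟩, ⟨hmem'.1.2, hmem'.2.2⟩⟩
    obtain ⟨U, V, hU, hV, hxU, hyV, hcond⟩ := exists_nbhd e hkS.1 m hkS.2
    rw [hem] at hxU hyV
    refine ⟨⟨(U, V, k), hU, ⟨x, hxU⟩, hV, hyV, hkS.1, fun m' h1 h2 => hcond m' h1 h2⟩,
      hxU, ⟨hk₁a.trans hk₁k, fun m' h => (hmem m' h).1⟩,
      ⟨hk₁b.trans hk₁k, fun m' h => (hmem m' h).2⟩⟩
  · rintro a b ⟨hab, hb⟩ hbx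
    have hby : y₀ ∈ b.val.2.1 := b.property.2.2.2.1
    have hk : b.val.2.2 ≤ m.val :=
      b.property.2.2.2.2.2 m (by rw [hem]; exact hbx) (by rw [hem]; exact hby)
    have := hb m hk
    rw [hem] at this
    exact this.1
end

section
/- With P, Q, and 𝒥 as above, and assuming X is T₁: the maximal elements of the ideal completion Idl(Q) (ordered by inclusion) are exactly the sets 𝒥(x) for x ∈ X, i.e., Max(Idl(Q)) = {𝒥(x) : x ∈ X}. -/
/-- An ideal with respect to a relation `r`: a nonempty, `r`-directed, `r`-lower set. -/
def IsIdealRel {β : Type*} (r : β → β → Prop) (I : Set β) : Prop :=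
  I.Nonempty ∧ (∀ a ∈ I, ∀ b ∈ I, ∃ c ∈ I, r a c ∧ r b c) ∧
    ∀ a b : β, r a b → b ∈ I → a ∈ I

/-- The ideal completion `Idl` of `(β, r)`, ordered by set inclusion. -/
abbrev IdlRel {β : Type*} (r : β → β → Prop) := {I : Set β // IsIdealRel r I}

section AuxLemmas

variable {P X Y : Type*} [PartialOrder P] [TopologicalSpace X] [TopologicalSpace Y]

/-- In a dcpo, every element lies below a maximal element. -/
lemma exists_max_above (hP : IsDcpo P) (p : P) : ∃ m : P, p ≤ m ∧ IsMax m := by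
  refine zorn_le_nonempty_Ici₀ p (fun c hc hchain y hy => ?_) p le_rfl
  obtain ⟨a, ha⟩ := hP c ⟨y, hy⟩ hchain.directedOn
  exact ⟨a, fun z hz => ha.1 hz⟩

/-- The set of compact elements below any point is nonempty (in an algebraic dcpo). -/
lemma compacts_below_nonempty (hP : IsAlgebraicDcpo P) (z : P) :
    {k : P | IsCompactElt k ∧ k ≤ z}.Nonempty := by
  by_contra h
  rw [Set.not_nonempty_iff_eq_empty] at h
  have hlub := (hP.2 z).2
  rw [h] at hlub
  have hleast : ∀ w : P, z ≤ w := fun w => hlub.2 (fun u hu => hu.elim)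
  have hzc : IsCompactElt z := fun d hne hdir a ha hza =>
    hne.imp fun w hw => ⟨hw, hleast w⟩
  have : z ∈ ({k : P | IsCompactElt k ∧ k ≤ z} : Set P) := ⟨hzc, le_rfl⟩
  rw [h] at this; exact this

lemma ici_scottOpen {k : P} (hk : IsCompactElt k) : ScottOpen (Set.Ici k) :=
  ⟨isUpperSet_Ici k, fun d hne hdir a ha hka => hk d hne hdir a ha hka⟩

lemma isOpen_maxSpace_iff {s : Set (MaxSpace P)} :
    IsOpen s ↔ ∃ S : Set P, ScottOpen S ∧ Subtype.val ⁻¹' S = s := by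
  letI : TopologicalSpace P := scottTop P
  exact isOpen_induced_iff

/-- Core construction lemma: given a compact element below `e.symm (x, y₀)` and an open
neighborhood `O` of `(x, y₀)`, we can find an element of `Q` whose first component contains
`x`, whose compact element dominates the given one, and whose upper set maps into `O`. -/
lemma core_construction (hP : IsAlgebraicDcpo P) (e : MaxSpace P ≃ₜ X × Y) (y₀ : Y) (x : X)
    (O : Set (X × Y)) (hO : IsOpen O) (hxO : (x, y₀) ∈ O)
    (k₀ : P) (hk₀c : IsCompactElt k₀) (hk₀n : k₀ ≤ (e.symm (x, y₀)).val) :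
    ∃ c ∈ QSet e y₀, x ∈ c.1 ∧ k₀ ≤ c.2.2 ∧
      ∀ m : MaxSpace P, c.2.2 ≤ m.val → e m ∈ O := by
  set n : MaxSpace P := e.symm (x, y₀) with hn
  have hen : e n = (x, y₀) := e.apply_symm_apply _
  have hpre : IsOpen (e ⁻¹' O) := hO.preimage e.continuous
  obtain ⟨S, hS, hSeq⟩ := isOpen_maxSpace_iff.mp hpre
  have hnS : n.val ∈ S := by
    have : n ∈ e ⁻¹' O := by simp [Set.mem_preimage, hen, hxO]
    rw [← hSeq] at this; exact this
  obtain ⟨hdir, hlub⟩ := hP.2 n.val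
  have hDne := compacts_below_nonempty hP n.val
  obtain ⟨k, hkD, hkS⟩ := hS.2 _ hDne hdir n.val hlub hnS
  obtain ⟨k', hk'D, hkk', hk₀k'⟩ := hdir k hkD k₀ ⟨hk₀c, hk₀n⟩
  have hk'S : k' ∈ S := hS.1 hkk' hkS
  have hupOpen : IsOpen {m : MaxSpace P | k' ≤ m.val} :=
    isOpen_maxSpace_iff.mpr ⟨Set.Ici k', ici_scottOpen hk'D.1, rfl⟩
  have hWopen : IsOpen (e '' {m : MaxSpace P | k' ≤ m.val}) :=
    e.isOpenMap _ hupOpen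
  have hWsubO : e '' {m : MaxSpace P | k' ≤ m.val} ⊆ O := by
    rintro _ ⟨m, hm, rfl⟩
    have : m.val ∈ S := hS.1 hm hk'S
    have : m ∈ e ⁻¹' O := by rw [← hSeq]; exact this
    exact this
  have hxyW : (x, y₀) ∈ e '' {m : MaxSpace P | k' ≤ m.val} :=
    ⟨n, hk'D.2, hen⟩
  obtain ⟨U', V', hU', hV', hxU', hyV', hUV⟩ := isOpen_prod_iff.mp hWopen x y₀ hxyW
  refine ⟨(U', V', k'), ⟨hU', ⟨x, hxU'⟩, hV', hyV', hk'D.1, ?_⟩, hxU', hk₀k', ?_⟩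
  · intro m hm1 hm2
    obtain ⟨m', hm', hem'⟩ := hUV (Set.mk_mem_prod hm1 hm2)
    rwa [e.injective hem'] at hm'
  · intro m hm
    exact hWsubO ⟨m, hm, rfl⟩

/-- For any `t ∈ Q` with `x ∈ U_t`, the compact element of `t` is below `e.symm (x, y₀)`. -/
lemma k_le_of_mem_J (e : MaxSpace P ≃ₜ X × Y) (y₀ : Y) (x : X) (t : QSet e y₀)
    (ht : x ∈ t.val.1) : t.val.2.2 ≤ (e.symm (x, y₀)).val := by
  have hen : e (e.symm (x, y₀)) = (x, y₀) := e.apply_symm_apply _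
  refine t.property.2.2.2.2.2 (e.symm (x, y₀)) ?_ ?_
  · rw [hen]; exact ht
  · rw [hen]; exact t.property.2.2.2.1

lemma J_lower (e : MaxSpace P ≃ₜ X × Y) (y₀ : Y) (x : X) :
    ∀ a b : QSet e y₀, QRel e y₀ a b → b ∈ JSet e y₀ x → a ∈ JSet e y₀ x := by
  intro a b hab hb
  have hkb := k_le_of_mem_J e y₀ x b hb
  have := (hab.2 (e.symm (x, y₀)) hkb).1
  rwa [e.apply_symm_apply] at this

lemma J_directed (hP : IsAlgebraicDcpo P) (e : MaxSpace P ≃ₜ X × Y) (y₀ : Y) (x : X) :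
    ∀ a ∈ JSet e y₀ x, ∀ b ∈ JSet e y₀ x,
      ∃ c ∈ JSet e y₀ x, QRel e y₀ a c ∧ QRel e y₀ b c := by
  intro a ha b hb
  have hka := k_le_of_mem_J e y₀ x a ha
  have hkb := k_le_of_mem_J e y₀ x b hb
  obtain ⟨hdir, _⟩ := hP.2 (e.symm (x, y₀)).val
  obtain ⟨k₀, hk₀D, hak₀, hbk₀⟩ := hdir _ ⟨a.property.2.2.2.2.1, hka⟩ _
    ⟨b.property.2.2.2.2.1, hkb⟩
  have hO : IsOpen ((a.val.1 ∩ b.val.1) ×ˢ (a.val.2.1 ∩ b.val.2.1)) :=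
    (a.property.1.inter b.property.1).prod (a.property.2.2.1.inter b.property.2.2.1)
  have hxO : (x, y₀) ∈ (a.val.1 ∩ b.val.1) ×ˢ (a.val.2.1 ∩ b.val.2.1) :=
    ⟨⟨ha, hb⟩, a.property.2.2.2.1, b.property.2.2.2.1⟩
  obtain ⟨c₀, hc₀Q, hxc₀, hk₀c₀, hc₀O⟩ :=
    core_construction hP e y₀ x _ hO hxO k₀ hk₀D.1 hk₀D.2
  refine ⟨⟨c₀, hc₀Q⟩, hxc₀, ⟨le_trans hak₀ hk₀c₀, fun m hm => ?_⟩,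
    ⟨le_trans hbk₀ hk₀c₀, fun m hm => ?_⟩⟩
  · have := hc₀O m hm; exact ⟨this.1.1, this.2.1⟩
  · have := hc₀O m hm; exact ⟨this.1.2, this.2.2⟩

/-- Every ideal of `Q` is contained in some `J(x')`. -/
lemma ideal_to_point (hP : IsAlgebraicDcpo P) (e : MaxSpace P ≃ₜ X × Y) (y₀ : Y)
    (I : Set (QSet e y₀)) (hI : IsIdealRel (QRel e y₀) I) :
    ∃ x' : X, ∀ t ∈ I, x' ∈ t.val.1 := by
  set D : Set P := (fun t : QSet e y₀ => t.val.2.2) '' I with hD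
  have hDne : D.Nonempty := hI.1.image _
  have hDdir : DirectedOn (· ≤ ·) D := by
    rintro _ ⟨a, ha, rfl⟩ _ ⟨b, hb, rfl⟩
    obtain ⟨c, hc, hac, hbc⟩ := hI.2.1 a ha b hb
    exact ⟨c.val.2.2, ⟨c, hc, rfl⟩, hac.1, hbc.1⟩
  obtain ⟨p, hp⟩ := hP.1 D hDne hDdir
  obtain ⟨m, hpm, hmmax⟩ := exists_max_above hP.1 p
  refine ⟨(e ⟨m, hmmax⟩).1, fun t ht => ?_⟩
  obtain ⟨c, hc, htc, _⟩ := hI.2.1 t ht t ht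
  have hkc : c.val.2.2 ≤ m := le_trans (hp.1 ⟨c, hc, rfl⟩) hpm
  exact (htc.2 ⟨m, hmmax⟩ hkc).1

end AuxLemmas

/-- For `X` a T₁ space, the maximal elements of the ideal completion
`Idl(Q)` (ordered by inclusion) are exactly the sets `𝒥(x)` for `x ∈ X`. -/
theorem max_idl_eq_J {P X Y : Type*} [PartialOrder P]
    [TopologicalSpace X] [TopologicalSpace Y] [T1Space X] (hP : IsAlgebraicDcpo P)
    (e : MaxSpace P ≃ₜ X × Y) (y₀ : Y) :
    {I : IdlRel (QRel e y₀) | IsMax I} =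
      {I : IdlRel (QRel e y₀) | ∃ x : X, I.val = JSet e y₀ x} := by
  ext I
  simp only [Set.mem_setOf_eq]
  constructor
  · intro hmax
    obtain ⟨x', hx'⟩ := ideal_to_point hP e y₀ I.val I.property
    have hJideal : IsIdealRel (QRel e y₀) (JSet e y₀ x') := by
      obtain ⟨t, ht⟩ := I.property.1
      exact ⟨⟨t, hx' t ht⟩, J_directed hP e y₀ x', J_lower e y₀ x'⟩
    have hle : I ≤ ⟨JSet e y₀ x', hJideal⟩ := fun t ht => hx' t ht
    exact ⟨x', subset_antisymm hle (hmax hle)⟩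
  · rintro ⟨x, hIx⟩
    intro I' hII'
    obtain ⟨x', hx'⟩ := ideal_to_point hP e y₀ I'.val I'.property
    have hxx' : x' = x := by
      by_contra hne
      have hO : IsOpen (({x'}ᶜ : Set X) ×ˢ (Set.univ : Set Y)) :=
        isOpen_compl_singleton.prod isOpen_univ
      have hxO : (x, y₀) ∈ (({x'}ᶜ : Set X) ×ˢ (Set.univ : Set Y)) :=
        ⟨fun h => hne (Set.mem_singleton_iff.mp h).symm, trivial⟩
      obtain ⟨k₀, hk₀c, hk₀n⟩ := compacts_below_nonempty hP (e.symm (x, y₀)).val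
      obtain ⟨c₀, hc₀Q, hxc₀, _, hc₀O⟩ :=
        core_construction hP e y₀ x _ hO hxO k₀ hk₀c hk₀n
      have hcI : (⟨c₀, hc₀Q⟩ : QSet e y₀) ∈ I'.val := by
        apply hII'
        rw [hIx]
        exact hxc₀
      have hx'c : x' ∈ c₀.1 := hx' _ hcI
      have hkn : c₀.2.2 ≤ (e.symm (x', y₀)).val :=
        k_le_of_mem_J e y₀ x' ⟨c₀, hc₀Q⟩ hx'c
      have := hc₀O (e.symm (x', y₀)) hkn
      rw [e.apply_symm_apply] at this
      exact this.1 rfl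
    intro t ht
    rw [hIx]
    exact hxx' ▸ hx' t ht
end

section
/- Let P be a dcpo in which every element is either compact or maximal. If D is a directed subset of a lower set A ⊆ P that is of the form A = ↓(C ∩ Max(P)) for some Scott-closed set C, then ⋁D ∈ A. -/
/-- In a dcpo in which every element is compact or maximal, if `D` is a
directed subset of the lower set `A = ↓(C ∩ Max(P))` for a Scott-closed `C`, then
`⋁D ∈ A`. -/
theorem directed_sup_mem {P : Type*} [PartialOrder P]
    (hdcpo : IsDcpo P) (hcm : ∀ x : P, IsCompactElt x ∨ IsMax x)
    (C : Set P) (hC : ScottClosed C)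
    (D : Set P) (hD : D ⊆ {y : P | ∃ x ∈ C ∩ {m : P | IsMax m}, y ≤ x})
    (hne : D.Nonempty) (hdir : DirectedOn (· ≤ ·) D) :
    ∀ s : P, IsLUB D s → s ∈ {y : P | ∃ x ∈ C ∩ {m : P | IsMax m}, y ≤ x} := by
  intro s hs
  rcases hcm s with hk | hmax
  · obtain ⟨d, hdD, hsd⟩ := hk D hne hdir s hs le_rfl
    obtain ⟨x, hx, hdx⟩ := hD hdD
    exact ⟨x, hx, hsd.trans hdx⟩
  · have hDC : D ⊆ C := fun d hdD => by
      obtain ⟨x, ⟨hxC, _⟩, hdx⟩ := hD hdD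
      exact hC.1 hdx hxC
    exact ⟨s, ⟨hC.2 D hDC hne hdir s hs, hmax⟩, le_rfl⟩
end
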